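/- Let |γ| < 1 and Γ ∈ ℝ, and define G_γ(w) = Γ(1−Γ)(w − 2 + w^{−1}) − (1/4)(w^γ − 2 + w^{−γ}) and F_γ(w) = (γ/4)((γ−1)w^{γ+1} + (γ+1)w^{1−γ}) − 2Γ(1−Γ) for w > 0. Then G_γ''(w) = −w^{−3} F_γ(w) for all w > 0, and F_γ(w) ≤ F_γ(1) for all 0 < w ≤ 1. -/

import Mathlib

open Set

noncomputable section

/-- for `|γ| < 1` and `Γ ∈ ℝ`, with
`G_γ(w) = Γ(1-Γ)(w - 2 + w⁻¹) - (1/4)(w^γ - 2 + w^{-γ})` and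
`F_γ(w) = (γ/4)((γ-1)w^{γ+1} + (γ+1)w^{1-γ}) - 2Γ(1-Γ)`, one has
`G_γ''(w) = -w^{-3} F_γ(w)` for all `w > 0`, and `F_γ(w) ≤ F_γ(1)` for `0 < w ≤ 1`. -/
theorem Ggamma_second_deriv (γ Γ : ℝ) (hγ : |γ| < 1) (G F : ℝ → ℝ)
    (hG : G = fun w => Γ * (1 - Γ) * (w - 2 + w⁻¹) - (1 / 4) * (w ^ γ - 2 + w ^ (-γ)))
    (hF : F = fun w => (γ / 4) * ((γ - 1) * w ^ (γ + 1) + (γ + 1) * w ^ (1 - γ))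
      - 2 * Γ * (1 - Γ)) :
    (∀ w : ℝ, 0 < w → deriv (deriv G) w = -w ^ (-3 : ℝ) * F w) ∧
    (∀ w : ℝ, 0 < w → w ≤ 1 → F w ≤ F 1) := by
  -- derivative of F
  have hFd : ∀ x : ℝ, 0 < x →
      HasDerivAt F (γ / 4 * ((γ ^ 2 - 1) * (x ^ γ - x ^ (-γ)))) x := by
    intro x hx
    have h1 : HasDerivAt (fun w : ℝ => w ^ (γ + 1)) ((γ + 1) * x ^ γ) x := by
      have := Real.hasDerivAt_rpow_const (p := γ + 1) (Or.inl hx.ne')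
      simpa [show γ + 1 - 1 = γ by ring] using this
    have h2 : HasDerivAt (fun w : ℝ => w ^ (1 - γ)) ((1 - γ) * x ^ (-γ)) x := by
      have := Real.hasDerivAt_rpow_const (p := 1 - γ) (Or.inl hx.ne')
      simpa [show 1 - γ - 1 = -γ by ring] using this
    have h := (((h1.const_mul (γ - 1)).add (h2.const_mul (γ + 1))).const_mul
      (γ / 4)).sub_const (2 * Γ * (1 - Γ))
    rw [hF]
    refine h.congr_deriv ?_
    ring
  -- first derivative of G
  have hGd : ∀ x : ℝ, 0 < x →
      HasDerivAt G (Γ * (1 - Γ) * (1 + -(x ^ 2)⁻¹)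
        - 1 / 4 * (γ * x ^ (γ - 1) + -γ * x ^ (-γ - 1))) x := by
    intro x hx
    have h1 : HasDerivAt (fun w : ℝ => w - 2 + w⁻¹) (1 + -(x ^ 2)⁻¹) x :=
      ((hasDerivAt_id x).sub_const 2).add (hasDerivAt_inv hx.ne')
    have h2 : HasDerivAt (fun w : ℝ => w ^ γ - 2 + w ^ (-γ))
        (γ * x ^ (γ - 1) + -γ * x ^ (-γ - 1)) x := by
      have ha := Real.hasDerivAt_rpow_const (p := γ) (Or.inl hx.ne')
      have hb := Real.hasDerivAt_rpow_const (p := -γ) (Or.inl hx.ne')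
      have := (ha.sub_const 2).add hb
      exact this.congr_deriv (by ring)
    have h := (h1.const_mul (Γ * (1 - Γ))).sub (h2.const_mul (1 / 4))
    rw [hG]
    exact h.congr_deriv (by ring)
  -- second derivative function
  set g1 : ℝ → ℝ := fun x => Γ * (1 - Γ) * (1 + -(x ^ 2)⁻¹)
        - 1 / 4 * (γ * x ^ (γ - 1) + -γ * x ^ (-γ - 1)) with hg1
  have hg1d : ∀ x : ℝ, 0 < x →
      HasDerivAt g1 (Γ * (1 - Γ) * (0 + -(-(2 * x ^ 1) / (x ^ 2) ^ 2))
        - 1 / 4 * (γ * ((γ - 1) * x ^ (γ - 2)) + -γ * ((-γ - 1) * x ^ (-γ - 2)))) x := by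
    intro x hx
    have hinv : HasDerivAt (fun w : ℝ => (w ^ 2)⁻¹) (-(2 * x ^ 1) / (x ^ 2) ^ 2) x :=
      (hasDerivAt_pow 2 x).inv (pow_ne_zero 2 hx.ne')
    have ha : HasDerivAt (fun w : ℝ => w ^ (γ - 1)) ((γ - 1) * x ^ (γ - 2)) x := by
      have := Real.hasDerivAt_rpow_const (p := γ - 1) (Or.inl hx.ne')
      simpa [show γ - 1 - 1 = γ - 2 by ring] using this
    have hb : HasDerivAt (fun w : ℝ => w ^ (-γ - 1)) ((-γ - 1) * x ^ (-γ - 2)) x := by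
      have := Real.hasDerivAt_rpow_const (p := -γ - 1) (Or.inl hx.ne')
      simpa [show -γ - 1 - 1 = -γ - 2 by ring] using this
    exact ((((hasDerivAt_const x (1:ℝ)).add hinv.neg).const_mul (Γ * (1 - Γ))).sub
      (((ha.const_mul γ).add (hb.const_mul (-γ))).const_mul (1 / 4)))
  constructor
  · intro w hw
    have hev : deriv G =ᶠ[nhds w] g1 := by
      filter_upwards [isOpen_Ioi.mem_nhds hw] with x hx
      exact (hGd x hx).deriv
    rw [hev.deriv_eq, (hg1d w hw).deriv, hF]
    beta_reduce
    have e1 : w ^ (γ - 2) = w ^ γ * (w⁻¹ * w⁻¹) := by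
      rw [show γ - 2 = γ + -1 + -1 by ring, Real.rpow_add hw, Real.rpow_add hw,
        Real.rpow_neg_one]; ring
    have e2 : w ^ (-γ - 2) = w ^ (-γ) * (w⁻¹ * w⁻¹) := by
      rw [show -γ - 2 = -γ + -1 + -1 by ring, Real.rpow_add hw, Real.rpow_add hw,
        Real.rpow_neg_one]; ring
    have e3 : w ^ (γ + 1) = w ^ γ * w := by
      rw [Real.rpow_add hw, Real.rpow_one]
    have e4 : w ^ (1 - γ) = w ^ (-γ) * w := by
      rw [show 1 - γ = -γ + 1 by ring, Real.rpow_add hw, Real.rpow_one]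
    have e5 : w ^ (-3 : ℝ) = w⁻¹ * w⁻¹ * w⁻¹ := by
      rw [show (-3 : ℝ) = -1 + -1 + -1 by norm_num, Real.rpow_add hw, Real.rpow_add hw,
        Real.rpow_neg_one]
    rw [e1, e2, e3, e4, e5]
    field_simp
    ring
  · intro w hw hw1
    have mono : MonotoneOn F (Ioc (0:ℝ) 1) := by
      apply monotoneOn_of_deriv_nonneg (convex_Ioc 0 1)
      · intro x hx
        exact (hFd x hx.1).continuousAt.continuousWithinAt
      · intro x hx
        rw [interior_Ioc] at hx
        exact (hFd x hx.1).differentiableAt.differentiableWithinAt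
      · intro x hx
        rw [interior_Ioc] at hx
        rw [(hFd x hx.1).deriv]
        have hγ2 : γ ^ 2 - 1 ≤ 0 := by
          have := abs_lt.mp hγ
          nlinarith [this.1, this.2]
        have hsign : γ * (x ^ γ - x ^ (-γ)) ≤ 0 := by
          rcases le_or_gt 0 γ with h0 | h0
          · apply mul_nonpos_of_nonneg_of_nonpos h0
            have := Real.rpow_le_rpow_of_exponent_ge hx.1 hx.2.le (by linarith : -γ ≤ γ)
            linarith
          · apply mul_nonpos_of_nonpos_of_nonneg h0.le
            have := Real.rpow_le_rpow_of_exponent_ge hx.1 hx.2.le (by linarith : γ ≤ -γ)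
            linarith
        nlinarith [hγ2, hsign]
    exact mono ⟨hw, hw1⟩ ⟨zero_lt_one, le_refl 1⟩ hw1
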